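/- If n is odd and n ≥ 3, then for every subset S of X with |S| ≥ 3 there exists a profile u such that the top cycle at u is exactly S. -/

import Mathlib

open Finset
open Fin.NatCast
open scoped Fin.CommRing

/-- The simple majority voting relation `x ≽_u y`:
`|{i : x ≻_{u(i)} y}| ≥ |{i : y ≻_{u(i)} x}|`.  A profile assigns to each
individual `i` a rank equivalence `u i : Fin m ≃ Fin m` (lower rank = better),
so `i` prefers `x` to `y` iff `(u i) x < (u i) y`. -/
def majGE {m n : ℕ} (u : Fin n → (Fin m ≃ Fin m)) (x y : Fin m) : Prop :=
  (univ.filter (fun i : Fin n => (u i) y < (u i) x)).card ≤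
    (univ.filter (fun i : Fin n => (u i) x < (u i) y)).card

/-- The top cycle `G_T(u)`: the set of alternatives that reach every
alternative via the transitive closure `R(u)` of the majority relation. -/
def topCycle {m n : ℕ} (u : Fin n → (Fin m ≃ Fin m)) : Set (Fin m) :=
  {x : Fin m | ∀ y : Fin m, Relation.TransGen (majGE u) x y}

/-- If `n` is odd with `n ≥ 3`, every subset of `X` of size at least 3 is in
the range of the top cycle correspondence. -/
theorem topCycle_range_odd (m n : ℕ) (hm : 3 ≤ m) (hn : 3 ≤ n) (hno : Odd n)
    (S : Finset (Fin m)) (hS : 3 ≤ S.card) :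
    ∃ u : Fin n → (Fin m ≃ Fin m), topCycle u = (S : Set (Fin m)) := by
  classical
  obtain ⟨t, hnt⟩ := hno
  set k := S.card with hkeq
  have hk : 3 ≤ k := hS
  have hkm : k ≤ m := by
    have := Finset.card_le_univ S
    simpa using this
  haveI : NeZero k := ⟨by omega⟩
  -- the equivalence between low positions and Fin k
  let E : {j : Fin m // (j : ℕ) < k} ≃ Fin k :=
    { toFun := fun j => ⟨(j : Fin m), j.2⟩
      invFun := fun j => ⟨⟨(j : ℕ), lt_of_lt_of_le j.2 hkm⟩, j.2⟩
      left_inv := fun j => Subtype.ext (Fin.ext rfl)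
      right_inv := fun j => Fin.ext rfl }
  have hcard1 : Fintype.card {x : Fin m // x ∈ S} = Fintype.card {j : Fin m // (j:ℕ) < k} := by
    rw [Fintype.card_coe, Fintype.card_congr E, Fintype.card_fin]
  have hcard2 : Fintype.card {x : Fin m // ¬ x ∈ S} = Fintype.card {j : Fin m // ¬ (j:ℕ) < k} := by
    rw [Fintype.card_subtype_compl, Fintype.card_subtype_compl, hcard1]
  let e1 : {x : Fin m // x ∈ S} ≃ {j : Fin m // (j:ℕ) < k} := Fintype.equivOfCardEq hcard1
  let e2 : {x : Fin m // ¬ x ∈ S} ≃ {j : Fin m // ¬ (j:ℕ) < k} := Fintype.equivOfCardEq hcard2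
  let σ : Fin m ≃ Fin m :=
    (Equiv.sumCompl (· ∈ S)).symm.trans ((e1.sumCongr e2).trans
      (Equiv.sumCompl (fun j : Fin m => (j:ℕ) < k)))
  have hσ : ∀ x : Fin m, ((σ x : Fin m) : ℕ) < k ↔ x ∈ S := by
    intro x
    by_cases hx : x ∈ S
    · simp only [σ, Equiv.trans_apply, Equiv.sumCompl_symm_apply_of_pos (p := (· ∈ S)) hx,
        Equiv.sumCongr_apply, Sum.map_inl, Equiv.sumCompl_apply_inl]
      exact iff_of_true (e1 ⟨x, hx⟩).2 hx
    · simp only [σ, Equiv.trans_apply, Equiv.sumCompl_symm_apply_of_neg (p := (· ∈ S)) hx,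
        Equiv.sumCongr_apply, Sum.map_inr, Equiv.sumCompl_apply_inr]
      exact iff_of_false (e2 ⟨x, hx⟩).2 hx
  -- the inner permutations of Fin k for each voter
  let inner : Fin n → Equiv.Perm (Fin k) := fun i =>
    if h : (i : ℕ) < 3 then Equiv.subRight (⟨(i:ℕ), lt_of_lt_of_le h hk⟩ : Fin k)
    else if (i:ℕ) % 2 = 1 then Equiv.refl _ else Fin.revPerm
  -- the profile
  let u : Fin n → (Fin m ≃ Fin m) := fun i => σ.trans ((inner i).extendDomain E.symm)
  have hval_in : ∀ (i : Fin n) (x : Fin m), x ∈ S → ((u i x : Fin m) : ℕ) < k := by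
    intro i x hx
    have h : ((σ x : Fin m) : ℕ) < k := (hσ x).mpr hx
    show (((inner i).extendDomain E.symm) (σ x) : ℕ) < k
    rw [Equiv.Perm.extendDomain_apply_subtype (p := fun j : Fin m => (j:ℕ) < k) (inner i) E.symm h]
    exact (E.symm _).2
  have hval_out : ∀ (i : Fin n) (x : Fin m), x ∉ S → u i x = σ x := by
    intro i x hx
    have h : ¬ ((σ x : Fin m) : ℕ) < k := fun hc => hx ((hσ x).mp hc)
    exact Equiv.Perm.extendDomain_apply_not_subtype (p := fun j : Fin m => (j:ℕ) < k) (inner i) E.symm h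
  have h_in_out : ∀ (x y : Fin m), x ∈ S → y ∉ S → ∀ i, u i x < u i y := by
    intro x y hx hy i
    have h1 := hval_in i x hx
    have h2 : u i y = σ y := hval_out i y hy
    have h3 : ¬ ((σ y : Fin m):ℕ) < k := fun hc => hy ((hσ y).mp hc)
    rw [Fin.lt_def, h2]
    omega
  -- the cycle elements
  let sfun : Fin k → Fin m := fun j => σ.symm (Fin.castLE hkm j)
  have hσs : ∀ j, σ (sfun j) = Fin.castLE hkm j := fun j => σ.apply_symm_apply _
  have hs_mem : ∀ j, sfun j ∈ S := by
    intro j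
    apply (hσ _).mp
    rw [hσs]
    exact j.2
  have hs_inj : Function.Injective sfun := by
    intro a b hab
    have h1 := σ.symm.injective hab
    have h2 : (a:ℕ) = (b:ℕ) := by simpa using congrArg Fin.val h1
    exact Fin.ext h2
  have hrankS : ∀ (i : Fin n) (j : Fin k), u i (sfun j) = Fin.castLE hkm (inner i j) := by
    intro i j
    show ((inner i).extendDomain E.symm) (σ (sfun j)) = _
    rw [hσs]
    have hj : ((Fin.castLE hkm j : Fin m) : ℕ) < k := j.2
    rw [Equiv.Perm.extendDomain_apply_subtype (p := fun j : Fin m => (j:ℕ) < k) (inner i) E.symm hj]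
    have h1 : (E.symm.symm ⟨Fin.castLE hkm j, hj⟩) = j := by
      rw [Equiv.symm_symm]
      exact Fin.ext rfl
    rw [h1]
    exact Fin.ext rfl
  have hcmp : ∀ (i : Fin n) (p q : Fin k),
      (u i (sfun p) < u i (sfun q) ↔ ((inner i p : ℕ) < (inner i q : ℕ))) := by
    intro i p q
    rw [hrankS, hrankS, Fin.lt_def, Fin.coe_castLE, Fin.coe_castLE]
  -- majority helpers
  have hmaj_refl : ∀ x, majGE u x x := fun x => le_refl _
  have hmaj_unan : ∀ x y, (∀ i, u i x < u i y) → majGE u x y := by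
    intro x y h
    show (univ.filter (fun i : Fin n => u i y < u i x)).card ≤ _
    have he : (univ.filter (fun i : Fin n => u i y < u i x)) = ∅ := by
      ext i
      simp only [mem_filter, mem_univ, true_and, Finset.notMem_empty, iff_false]
      exact fun hc => absurd (h i) (asymm hc)
    rw [he]
    simp
  have hmaj_unan_not : ∀ x y, (∀ i, u i x < u i y) → ¬ majGE u y x := by
    intro x y h hc
    have h1 : (univ.filter (fun i : Fin n => u i x < u i y)) = univ := by
      apply Finset.filter_true_of_mem
      exact fun i _ => h i
    have h2 : (univ.filter (fun i : Fin n => u i y < u i x)) = ∅ := by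
      ext i
      simp only [mem_filter, mem_univ, true_and, Finset.notMem_empty, iff_false]
      exact fun hcc => absurd (h i) (asymm hcc)
    have hc' : (univ.filter (fun i : Fin n => u i x < u i y)).card ≤
        (univ.filter (fun i : Fin n => u i y < u i x)).card := hc
    rw [h1, h2, Finset.card_univ, Fintype.card_fin, Finset.card_empty] at hc'
    omega
  have hone : ((1 : Fin k) : ℕ) = 1 := by
    rw [Fin.val_one']
    exact Nat.mod_eq_of_lt (lt_of_lt_of_le (by norm_num) hk)
  have hcoe : ∀ (v : ℕ) (h : v < n), (((⟨v, h⟩ : Fin n)) : ℕ) = v := fun _ _ => rfl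
  have hadd1 : ∀ a : Fin k, ((a + 1 : Fin k) : ℕ) = (((a : Fin k) : ℕ) + 1) % k := by
    intro a
    rw [Fin.add_def, hone]
  -- the cycle edges
  have hedge : ∀ p : Fin k, majGE u (sfun p) (sfun (p + 1)) := by
    intro p
    have hq : ((p + 1 : Fin k) : ℕ) = ((p : ℕ) + 1) % k := hadd1 p
    have hplt := p.isLt
    have hpq : p ≠ p + 1 := by
      intro hc
      have hcv := congrArg Fin.val hc
      rw [hq] at hcv
      rcases Nat.lt_or_ge ((p:ℕ)+1) k with h | h
      · rw [Nat.mod_eq_of_lt h] at hcv; omega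
      · have h1 : (p:ℕ) + 1 = k := by omega
        rw [h1, Nat.mod_self] at hcv
        omega
    have hxy : sfun p ≠ sfun (p+1) := fun hc => hpq (hs_inj hc)
    -- characterization of preferring (p+1) to p for subRight voters
    have hsubR : ∀ c : Fin k, (((p+1) - c : Fin k):ℕ) < ((p - c : Fin k):ℕ) →
        c = p - (⟨k-1, by omega⟩ : Fin k) := by
      intro c h
      have h2 : (p+1) - c = (p - c) + 1 := by ring
      rw [h2] at h
      have ha : ((p - c + 1 : Fin k):ℕ) = (((p - c : Fin k):ℕ)+1) % k := hadd1 (p - c)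
      have hlt := (p - c).isLt
      have hval : (p - c : Fin k) = (⟨k-1, by omega⟩ : Fin k) := by
        rcases Nat.lt_or_ge (((p - c : Fin k):ℕ)+1) k with hl | hg
        · rw [Nat.mod_eq_of_lt hl] at ha; exact absurd h (by omega)
        · apply Fin.ext
          show ((p - c : Fin k):ℕ) = k - 1
          omega
      rw [← hval]
      exact (sub_sub_cancel p c).symm
    have htrich : ∀ i : Fin n, ¬ (u i (sfun (p+1)) < u i (sfun p)) → u i (sfun p) < u i (sfun (p+1)) := by
      intro i h2
      rcases lt_trichotomy (u i (sfun p)) (u i (sfun (p+1))) with h|h|h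
      · exact h
      · exact absurd ((u i).injective h) hxy
      · exact absurd h h2
    show (univ.filter (fun i : Fin n => u i (sfun (p+1)) < u i (sfun p))).card ≤
      (univ.filter (fun i : Fin n => u i (sfun p) < u i (sfun (p+1)))).card
    set B := univ.filter (fun i : Fin n => u i (sfun (p+1)) < u i (sfun p)) with hB
    set A := univ.filter (fun i : Fin n => u i (sfun p) < u i (sfun (p+1))) with hA
    have hBsplit := Finset.card_filter_add_card_filter_not
      (s := B) (p := fun i : Fin n => (i:ℕ) < 3)
    have hAsplit := Finset.card_filter_add_card_filter_not
      (s := A) (p := fun i : Fin n => (i:ℕ) < 3)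
    -- small voters in B: at most one
    have hBsmall : (B.filter (fun i : Fin n => (i:ℕ) < 3)).card ≤ 1 := by
      rw [Finset.card_le_one]
      intro a ha b hb
      simp only [hB, Finset.mem_filter, Finset.mem_univ, true_and] at ha hb
      obtain ⟨haB, ha3⟩ := ha
      obtain ⟨hbB, hb3⟩ := hb
      have hpa : inner a = Equiv.subRight (⟨(a:ℕ), lt_of_lt_of_le ha3 hk⟩ : Fin k) := by
        simp only [inner, dif_pos ha3]
      have hpb : inner b = Equiv.subRight (⟨(b:ℕ), lt_of_lt_of_le hb3 hk⟩ : Fin k) := by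
        simp only [inner, dif_pos hb3]
      have hva := (hcmp a (p+1) p).mp haB
      have hvb := (hcmp b (p+1) p).mp hbB
      rw [hpa] at hva
      rw [hpb] at hvb
      simp only [Equiv.subRight_apply] at hva hvb
      have h1 := hsubR _ hva
      have h2 := hsubR _ hvb
      have h3 : (⟨(a:ℕ), lt_of_lt_of_le ha3 hk⟩ : Fin k) = ⟨(b:ℕ), lt_of_lt_of_le hb3 hk⟩ :=
        h1.trans h2.symm
      have h4 : (a:ℕ) = (b:ℕ) := by simpa using congrArg Fin.val h3
      exact Fin.ext h4
    -- small voters: at least 3 in total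
    have hT : 3 ≤ (univ.filter (fun i : Fin n => (i:ℕ) < 3)).card := by
      have hsub : ({⟨0, by omega⟩, ⟨1, by omega⟩, ⟨2, by omega⟩} : Finset (Fin n)) ⊆
          univ.filter (fun i : Fin n => (i:ℕ) < 3) := by
        intro i hi
        simp only [Finset.mem_insert, Finset.mem_singleton] at hi
        simp only [Finset.mem_filter, Finset.mem_univ, true_and]
        rcases hi with h|h|h <;> subst h <;> norm_num
      have hc : ({⟨0, by omega⟩, ⟨1, by omega⟩, ⟨2, by omega⟩} : Finset (Fin n)).card = 3 := by
        rw [Finset.card_insert_of_notMem, Finset.card_insert_of_notMem, Finset.card_singleton]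
        · simp [Fin.ext_iff]
        · simp [Fin.ext_iff]
      rw [← hc]
      exact Finset.card_le_card hsub
    have hTsub : (univ.filter (fun i : Fin n => (i:ℕ) < 3)) ⊆
        (A.filter (fun i : Fin n => (i:ℕ) < 3)) ∪ (B.filter (fun i : Fin n => (i:ℕ) < 3)) := by
      intro i hi
      simp only [Finset.mem_filter, Finset.mem_univ, true_and] at hi
      rcases em (u i (sfun (p+1)) < u i (sfun p)) with hb | hb
      · apply Finset.mem_union_right
        simp only [hB, Finset.mem_filter, Finset.mem_univ, true_and]
        exact ⟨hb, hi⟩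
      · apply Finset.mem_union_left
        simp only [hA, Finset.mem_filter, Finset.mem_univ, true_and]
        exact ⟨htrich i hb, hi⟩
    have hAsmall : 2 ≤ (A.filter (fun i : Fin n => (i:ℕ) < 3)).card := by
      have h1 := Finset.card_le_card hTsub
      have h2 := Finset.card_union_le (A.filter (fun i : Fin n => (i:ℕ) < 3))
        (B.filter (fun i : Fin n => (i:ℕ) < 3))
      omega
    -- big voters: injection from B-big into A-big
    have hBbig : (B.filter (fun i : Fin n => ¬ (i:ℕ) < 3)).card ≤
        (A.filter (fun i : Fin n => ¬ (i:ℕ) < 3)).card := by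
      have hbound : ∀ i : Fin n, (i:ℕ) - 1 < n := fun i => by
        have := i.isLt; omega
      apply Finset.card_le_card_of_injOn (fun i : Fin n =>
        if h1 : (i:ℕ) % 2 = 1 then (if h2 : (i:ℕ)+1 < n then (⟨(i:ℕ)+1, h2⟩ : Fin n) else i)
        else ⟨(i:ℕ)-1, hbound i⟩)
      · intro a ha
        rw [Finset.mem_coe] at ha ⊢
        simp only [hB, Finset.mem_filter, Finset.mem_univ, true_and] at ha
        obtain ⟨haB, ha3⟩ := ha
        have ha3' : 3 ≤ (a:ℕ) := by omega
        have hva := (hcmp a (p+1) p).mp haB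
        have hvq := (p+1).isLt
        have hvp := p.isLt
        rcases em ((a:ℕ) % 2 = 1) with hpar | hpar
        · -- a is a refl voter, prefers p+1 : so (p+1).val < p.val
          have hpa : inner a = Equiv.refl _ := by
            simp only [inner, dif_neg (by omega : ¬ (a:ℕ) < 3), if_pos hpar]
          rw [hpa] at hva
          simp only [Equiv.refl_apply] at hva
          have h2 : (a:ℕ)+1 < n := by
            have := a.isLt; omega
          simp only [dif_pos hpar, dif_pos h2]
          simp only [hA, Finset.mem_filter, Finset.mem_univ, true_and]
          constructor
          · rw [hcmp]
            have hpb : inner (⟨(a:ℕ)+1, h2⟩ : Fin n) = Fin.revPerm := by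
              simp only [inner]
              rw [dif_neg (by rw [hcoe]; omega), if_neg (by rw [hcoe]; omega)]
            rw [hpb]
            simp only [Fin.revPerm_apply, Fin.val_rev]
            omega
          · simp
            omega
        · -- a is a rev voter, prefers p+1 : so p.val < (p+1).val
          have hpa : inner a = Fin.revPerm := by
            simp only [inner, dif_neg (by omega : ¬ (a:ℕ) < 3), if_neg hpar]
          rw [hpa] at hva
          simp only [Fin.revPerm_apply, Fin.val_rev] at hva
          simp only [dif_neg hpar]
          simp only [hA, Finset.mem_filter, Finset.mem_univ, true_and]
          constructor
          · rw [hcmp]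
            have hpb : inner (⟨(a:ℕ)-1, hbound a⟩ : Fin n) = Equiv.refl _ := by
              simp only [inner]
              rw [dif_neg (by rw [hcoe]; omega), if_pos (by rw [hcoe]; omega)]
            rw [hpb]
            simp only [Equiv.refl_apply]
            omega
          · simp
            omega
      · intro a ha b hb hab
        simp only [Finset.coe_filter, Set.mem_setOf_eq] at ha hb
        obtain ⟨haB, ha3⟩ := ha
        obtain ⟨hbB, hb3⟩ := hb
        simp only [hB, Finset.mem_filter, Finset.mem_univ, true_and] at haB hbB
        have ha3' : 3 ≤ (a:ℕ) := by omega
        have hb3' : 3 ≤ (b:ℕ) := by omega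
        have han : (a:ℕ) < n := a.isLt
        have hbn : (b:ℕ) < n := b.isLt
        rcases em ((a:ℕ) % 2 = 1) with hpa | hpa <;> rcases em ((b:ℕ) % 2 = 1) with hpb | hpb
        · have h2a : (a:ℕ)+1 < n := by omega
          have h2b : (b:ℕ)+1 < n := by omega
          simp only [dif_pos hpa, dif_pos hpb, dif_pos h2a, dif_pos h2b] at hab
          have := congrArg Fin.val hab
          simp only at this
          exact Fin.ext (by omega)
        · have h2a : (a:ℕ)+1 < n := by omega
          simp only [dif_pos hpa, dif_pos h2a, dif_neg hpb] at hab
          have := congrArg Fin.val hab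
          simp only at this
          omega
        · have h2b : (b:ℕ)+1 < n := by omega
          simp only [dif_pos hpb, dif_pos h2b, dif_neg hpa] at hab
          have := congrArg Fin.val hab
          simp only at this
          omega
        · simp only [dif_neg hpa, dif_neg hpb] at hab
          have := congrArg Fin.val hab
          simp only at this
          exact Fin.ext (by omega)
    omega
  -- reachability around the cycle
  have hreach : ∀ (d : ℕ) (p : Fin k),
      Relation.TransGen (majGE u) (sfun p) (sfun (p + (d : Fin k))) := by
    intro d
    induction d with
    | zero =>
      intro p
      have : p + ((0:ℕ) : Fin k) = p := by push_cast; ring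
      rw [this]
      exact Relation.TransGen.single (hmaj_refl (sfun p))
    | succ d ih =>
      intro p
      have h1 : (((d+1 : ℕ)) : Fin k) = (d : Fin k) + 1 := by push_cast; ring
      rw [h1, ← add_assoc]
      exact (ih p).tail (hedge (p + (d : Fin k)))
  refine ⟨u, ?_⟩
  ext x
  simp only [topCycle, Set.mem_setOf_eq, Finset.coe_sort_coe, Finset.mem_coe]
  constructor
  · intro hx
    by_contra hxS
    obtain ⟨s0, hs0⟩ := Finset.card_pos.mp (by omega : 0 < S.card)
    have hstep : ∀ a b : Fin m, a ∉ S → majGE u a b → b ∉ S := by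
      intro a b ha hab hbS
      exact hmaj_unan_not b a (h_in_out b a hbS ha) hab
    have key : ∀ b : Fin m, Relation.TransGen (majGE u) x b → b ∉ S := by
      intro b hb
      induction hb with
      | single h => exact hstep _ _ hxS h
      | tail h1 h2 ih => exact hstep _ _ ih h2
    exact key s0 (hx s0) hs0
  · intro hxS y
    by_cases hy : y ∈ S
    · have hpx : ((σ x : Fin m) : ℕ) < k := (hσ x).mpr hxS
      have hpy : ((σ y : Fin m) : ℕ) < k := (hσ y).mpr hy
      set px : Fin k := ⟨((σ x : Fin m) : ℕ), hpx⟩ with hpxdef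
      set py : Fin k := ⟨((σ y : Fin m) : ℕ), hpy⟩ with hpydef
      have hx' : sfun px = x := by
        show σ.symm (Fin.castLE hkm px) = x
        have : Fin.castLE hkm px = σ x := Fin.ext rfl
        rw [this, σ.symm_apply_apply]
      have hy' : sfun py = y := by
        show σ.symm (Fin.castLE hkm py) = y
        have : Fin.castLE hkm py = σ y := Fin.ext rfl
        rw [this, σ.symm_apply_apply]
      have h1 := hreach (((py - px : Fin k) : ℕ)) px
      rw [Fin.cast_val_eq_self] at h1
      have h2 : px + (py - px) = py := by ring
      rw [h2, hx', hy'] at h1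
      exact h1
    · exact Relation.TransGen.single (hmaj_unan x y (h_in_out x y hxS hy))
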